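/- Let p, m, N be positive natural numbers, ζ₀ ∈ ℝ^p, V₀ ∈ ℝ^m a constant, and for n = 1, …, N let R_n : ℝ^p × ℝ^m × ℝ^m → ℝ^m and V_n : ℝ^p → ℝ^m be maps, differentiable at the relevant points, satisfying R_n(ζ, V_n(ζ), V_{n−1}(ζ)) = 0 for all ζ in a neighborhood of ζ₀ (with V₀(ζ) ≡ V₀). Let F : ℝ^p × (ℝ^m)^N → ℝ be differentiable at (ζ₀, V₁(ζ₀), …, V_N(ζ₀)). Write A_n, B_{n+1}, C_n for the partial Fréchet derivatives of R_n with respect to its second argument, of R_{n+1} with respect to its third argument, and of R_n with respect to ζ, all evaluated at (ζ₀, V_n(ζ₀), V_{n−1}(ζ₀)) (respectively (ζ₀, V_{n+1}(ζ₀), V_n(ζ₀))), and write ∂F/∂ζ, ∂F/∂V_n for the partial derivatives of F at the same base point. Suppose λ₁, …, λ_N ∈ ℝ^m satisfy the adjoint equations A_n^T λ_n + B_{n+1}^T λ_{n+1} = −∂F/∂V_n for n = 1, …, N−1 and A_N^T λ_N = −∂F/∂V_N. Then the gradient at ζ₀ of the reduced function ζ ↦ F(ζ, V₁(ζ), …,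 V_N(ζ)) equals ∂F/∂ζ + Σ_{n=1}^{N} C_n^T λ_n. -/

import Mathlib

open scoped RealInnerProductSpace

lemma inner_grad' {F : Type*} [NormedAddCommGroup F] [InnerProductSpace ℝ F] [CompleteSpace F]
    (f : F → ℝ) (x v : F) : ⟪gradient f x, v⟫ = fderiv ℝ f x v := by
  simp [gradient, InnerProductSpace.toDual_symm_apply]

lemma sum_adjoint_arith' (M : ℕ) (a b t : ℕ → ℝ)
    (hb1 : b 1 = 0)
    (hmid : ∀ k, 1 ≤ k → k ≤ M → a k + b (k + 1) = - t k)
    (hlast : a (M + 1) = - t (M + 1)) :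
    ∑ k ∈ Finset.range (M + 1), (-(a (k + 1)) - b (k + 1))
      = ∑ k ∈ Finset.range (M + 1), t (k + 1) := by
  have hA : ∑ k ∈ Finset.range (M+1), a (k+1)
      = (∑ k ∈ Finset.range M, a (k+1)) + a (M+1) := Finset.sum_range_succ _ M
  have hB : ∑ k ∈ Finset.range (M+1), b (k+1)
      = (∑ k ∈ Finset.range M, b (k+1+1)) + b (0+1) := Finset.sum_range_succ' (fun k => b (k+1)) M
  have hsub : ∑ k ∈ Finset.range (M+1), (-(a (k+1)) - b (k+1))
      = -((∑ k ∈ Finset.range (M+1), a (k+1)) + ∑ k ∈ Finset.range (M+1), b (k+1)) := by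
    rw [← Finset.sum_add_distrib, ← Finset.sum_neg_distrib]
    exact Finset.sum_congr rfl fun k _ => by ring
  have hmid' : ∑ k ∈ Finset.range M, (a (k+1) + b (k+1+1)) = ∑ k ∈ Finset.range M, (- t (k+1)) :=
    Finset.sum_congr rfl fun k hk => hmid (k+1) (by omega) (by
      have := Finset.mem_range.mp hk; omega)
  have hT : ∑ k ∈ Finset.range (M+1), t (k+1)
      = (∑ k ∈ Finset.range M, t (k+1)) + t (M+1) := Finset.sum_range_succ _ M
  rw [Finset.sum_add_distrib, Finset.sum_neg_distrib] at hmid'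
  rw [hsub, hA, hB, hT]
  simp only [hb1]
  linarith [hmid', hlast]


noncomputable def clmSingle (m N : ℕ) (i : Fin N) :
    EuclideanSpace ℝ (Fin m) →L[ℝ] (Fin N → EuclideanSpace ℝ (Fin m)) :=
  ContinuousLinearMap.pi (Pi.single (M := fun _ : Fin N => EuclideanSpace ℝ (Fin m) →L[ℝ] EuclideanSpace ℝ (Fin m)) i (ContinuousLinearMap.id ℝ (EuclideanSpace ℝ (Fin m))))

lemma clmSingle_apply (m N : ℕ) (i : Fin N) (v : EuclideanSpace ℝ (Fin m)) :
    clmSingle m N i v = Pi.single i v := by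
  funext j
  by_cases h : j = i
  · subst h; simp [clmSingle]
  · simp [clmSingle, Pi.single_eq_of_ne h]

theorem adjoint_sensitivity
    (p m N : ℕ) (hp : 0 < p) (hm : 0 < m) (hN : 0 < N)
    (ζ₀ : EuclideanSpace ℝ (Fin p))
    (V : ℕ → EuclideanSpace ℝ (Fin p) → EuclideanSpace ℝ (Fin m))
    (hV0 : ∀ ζ, V 0 ζ = V 0 ζ₀)
    (R : ℕ → EuclideanSpace ℝ (Fin p) → EuclideanSpace ℝ (Fin m) →
        EuclideanSpace ℝ (Fin m) → EuclideanSpace ℝ (Fin m))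
    (hres : ∀ n, 1 ≤ n → n ≤ N →
      ∀ᶠ ζ in nhds ζ₀, R n ζ (V n ζ) (V (n - 1) ζ) = 0)
    (hVdiff : ∀ n, n ≤ N → DifferentiableAt ℝ (V n) ζ₀)
    (hRdiff : ∀ n, 1 ≤ n → n ≤ N →
      DifferentiableAt ℝ
        (fun q : EuclideanSpace ℝ (Fin p) × EuclideanSpace ℝ (Fin m) ×
            EuclideanSpace ℝ (Fin m) => R n q.1 q.2.1 q.2.2)
        (ζ₀, V n ζ₀, V (n - 1) ζ₀))
    (𝓕 : EuclideanSpace ℝ (Fin p) × (Fin N → EuclideanSpace ℝ (Fin m)) → ℝ)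
    (h𝓕diff : DifferentiableAt ℝ 𝓕 (ζ₀, fun i : Fin N => V ((i : ℕ) + 1) ζ₀))
    (lam : ℕ → EuclideanSpace ℝ (Fin m))
    (hadj : ∀ n (h1 : 1 ≤ n) (h2 : n ≤ N - 1),
      ContinuousLinearMap.adjoint
          (fderiv ℝ (fun x => R n ζ₀ x (V (n - 1) ζ₀)) (V n ζ₀)) (lam n)
        + ContinuousLinearMap.adjoint
          (fderiv ℝ (fun y => R (n + 1) ζ₀ (V (n + 1) ζ₀) y) (V n ζ₀)) (lam (n + 1))
        = - gradient
            (fun w => 𝓕 (ζ₀, Function.update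
              (fun i : Fin N => V ((i : ℕ) + 1) ζ₀) (⟨n - 1, by omega⟩ : Fin N) w))
            (V n ζ₀))
    (hadjN :
      ContinuousLinearMap.adjoint
          (fderiv ℝ (fun x => R N ζ₀ x (V (N - 1) ζ₀)) (V N ζ₀)) (lam N)
        = - gradient
            (fun w => 𝓕 (ζ₀, Function.update
              (fun i : Fin N => V ((i : ℕ) + 1) ζ₀) (⟨N - 1, by omega⟩ : Fin N) w))
            (V N ζ₀)) :
    gradient (fun ζ => 𝓕 (ζ, fun i : Fin N => V ((i : ℕ) + 1) ζ)) ζ₀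
      = gradient (fun ζ => 𝓕 (ζ, fun i : Fin N => V ((i : ℕ) + 1) ζ₀)) ζ₀
        + ∑ i : Fin N,
            ContinuousLinearMap.adjoint
              (fderiv ℝ
                (fun ζ => R ((i : ℕ) + 1) ζ (V ((i : ℕ) + 1) ζ₀) (V (i : ℕ) ζ₀)) ζ₀)
              (lam ((i : ℕ) + 1)) := by
  classical
  set W : Fin N → (EuclideanSpace ℝ (Fin m)) := fun i : Fin N => V ((i : ℕ) + 1) ζ₀ with hW
  set L := fderiv ℝ 𝓕 (ζ₀, W) with hL
  -- derivative of V 0 is zero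
  have hD0 : fderiv ℝ (V 0) ζ₀ = 0 := by
    have h : V 0 = fun _ => V 0 ζ₀ := funext hV0
    rw [h]; exact fderiv_const_apply _
  -- the single continuous linear map into the pi type
  have hsingle : ∀ (i : Fin N) (v : (EuclideanSpace ℝ (Fin m))),
      (clmSingle m N i) v = Pi.single i v := clmSingle_apply m N
  -- derivative of update map
  have hupd : ∀ i : Fin N, HasFDerivAt (fun w => Function.update W i w)
      (clmSingle m N i) (W i) := by
    intro i
    have heq : (fun w : (EuclideanSpace ℝ (Fin m)) => Function.update W i w)
        = fun w => (clmSingle m N i) w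
            + Function.update W i 0 := by
      funext w j
      by_cases h : j = i
      · subst h; simp [hsingle]
      · simp [Function.update_of_ne h, hsingle, Pi.single_eq_of_ne h]
    rw [heq]
    exact ((clmSingle m N i).hasFDerivAt).add_const _
  -- partial gradients of 𝓕 in state directions
  have hg : ∀ (i : Fin N) (v : (EuclideanSpace ℝ (Fin m))),
      ⟪gradient (fun w => 𝓕 (ζ₀, Function.update W i w)) (W i), v⟫
        = L ((0 : EuclideanSpace ℝ (Fin p)), Pi.single i v) := by
    intro i v
    have h𝓕' : HasFDerivAt 𝓕 L (ζ₀, Function.update W i (W i)) := by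
      rw [Function.update_eq_self]; exact h𝓕diff.hasFDerivAt
    have hin : HasFDerivAt (fun w : (EuclideanSpace ℝ (Fin m)) => (ζ₀, Function.update W i w))
        (((0 : (EuclideanSpace ℝ (Fin m)) →L[ℝ] EuclideanSpace ℝ (Fin p))).prod (clmSingle m N i))
        (W i) := HasFDerivAt.prodMk (hasFDerivAt_const ζ₀ (W i)) (hupd i)
    have hcomp : HasFDerivAt (fun w => 𝓕 (ζ₀, Function.update W i w))
        (L.comp (((0 : (EuclideanSpace ℝ (Fin m)) →L[ℝ] EuclideanSpace ℝ (Fin p))).prod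
          (clmSingle m N i))) (W i) :=
      h𝓕'.comp (W i) hin
    rw [inner_grad', hcomp.fderiv]
    simp [hsingle]
  -- derivative of the reduced objective
  have hPi : HasFDerivAt (fun ζ : EuclideanSpace ℝ (Fin p) => fun i : Fin N => V ((i : ℕ) + 1) ζ)
      (ContinuousLinearMap.pi fun i : Fin N => fderiv ℝ (V ((i : ℕ) + 1)) ζ₀) ζ₀ :=
    hasFDerivAt_pi.mpr fun i => (hVdiff ((i : ℕ) + 1) i.isLt).hasFDerivAt
  have hred : HasFDerivAt (fun ζ => 𝓕 (ζ, fun i : Fin N => V ((i : ℕ) + 1) ζ))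
      (L.comp ((ContinuousLinearMap.id ℝ (EuclideanSpace ℝ (Fin p))).prod
        (ContinuousLinearMap.pi fun i : Fin N => fderiv ℝ (V ((i : ℕ) + 1)) ζ₀))) ζ₀ :=
    h𝓕diff.hasFDerivAt.comp ζ₀ (HasFDerivAt.prodMk (hasFDerivAt_id ζ₀) hPi)
  have hpartζ : HasFDerivAt (fun ζ => 𝓕 (ζ, W))
      (L.comp ((ContinuousLinearMap.id ℝ (EuclideanSpace ℝ (Fin p))).prod 0)) ζ₀ :=
    h𝓕diff.hasFDerivAt.comp ζ₀ (HasFDerivAt.prodMk (hasFDerivAt_id ζ₀) (hasFDerivAt_const W ζ₀))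
  -- residual derivative identity
  have hK : ∀ n, 1 ≤ n → n ≤ N → ∀ u : EuclideanSpace ℝ (Fin p),
      fderiv ℝ (fun ζ => R n ζ (V n ζ₀) (V (n - 1) ζ₀)) ζ₀ u
      + fderiv ℝ (fun x => R n ζ₀ x (V (n - 1) ζ₀)) (V n ζ₀) (fderiv ℝ (V n) ζ₀ u)
      + fderiv ℝ (fun y => R n ζ₀ (V n ζ₀) y) (V (n - 1) ζ₀) (fderiv ℝ (V (n - 1)) ζ₀ u)
      = 0 := by
    intro n h1 h2 u
    set Mn := fderiv ℝ (fun q : EuclideanSpace ℝ (Fin p) × (EuclideanSpace ℝ (Fin m)) × (EuclideanSpace ℝ (Fin m)) => R n q.1 q.2.1 q.2.2)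
      (ζ₀, V n ζ₀, V (n - 1) ζ₀) with hMn
    have hC : HasFDerivAt (fun ζ => R n ζ (V n ζ₀) (V (n - 1) ζ₀))
        (Mn.comp ((ContinuousLinearMap.id ℝ (EuclideanSpace ℝ (Fin p))).prod 0)) ζ₀ :=
      (hRdiff n h1 h2).hasFDerivAt.comp (f := fun ζ => (ζ, V n ζ₀, V (n - 1) ζ₀)) ζ₀
        (HasFDerivAt.prodMk (hasFDerivAt_id ζ₀) (hasFDerivAt_const (V n ζ₀, V (n - 1) ζ₀) ζ₀))
    have hA : HasFDerivAt (fun x => R n ζ₀ x (V (n - 1) ζ₀))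
        (Mn.comp ((0 : (EuclideanSpace ℝ (Fin m)) →L[ℝ] EuclideanSpace ℝ (Fin p)).prod
          ((ContinuousLinearMap.id ℝ (EuclideanSpace ℝ (Fin m))).prod 0))) (V n ζ₀) :=
      (hRdiff n h1 h2).hasFDerivAt.comp (f := fun x => (ζ₀, x, V (n - 1) ζ₀)) (V n ζ₀)
        (HasFDerivAt.prodMk (hasFDerivAt_const ζ₀ (V n ζ₀))
          (HasFDerivAt.prodMk (hasFDerivAt_id (V n ζ₀)) (hasFDerivAt_const (V (n - 1) ζ₀) (V n ζ₀))))
    have hB : HasFDerivAt (fun y => R n ζ₀ (V n ζ₀) y)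
        (Mn.comp ((0 : (EuclideanSpace ℝ (Fin m)) →L[ℝ] EuclideanSpace ℝ (Fin p)).prod
          ((0 : (EuclideanSpace ℝ (Fin m)) →L[ℝ] (EuclideanSpace ℝ (Fin m))).prod (ContinuousLinearMap.id ℝ (EuclideanSpace ℝ (Fin m)))))) (V (n - 1) ζ₀) :=
      (hRdiff n h1 h2).hasFDerivAt.comp (f := fun y => (ζ₀, V n ζ₀, y)) (V (n - 1) ζ₀)
        (HasFDerivAt.prodMk (hasFDerivAt_const ζ₀ (V (n - 1) ζ₀))
          (HasFDerivAt.prodMk (hasFDerivAt_const (V n ζ₀) (V (n - 1) ζ₀)) (hasFDerivAt_id (V (n - 1) ζ₀))))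
    have hfull : HasFDerivAt (fun ζ => R n ζ (V n ζ) (V (n - 1) ζ))
        (Mn.comp ((ContinuousLinearMap.id ℝ (EuclideanSpace ℝ (Fin p))).prod
          ((fderiv ℝ (V n) ζ₀).prod (fderiv ℝ (V (n - 1)) ζ₀)))) ζ₀ :=
      (hRdiff n h1 h2).hasFDerivAt.comp (f := fun ζ => (ζ, V n ζ, V (n - 1) ζ)) ζ₀
        (HasFDerivAt.prodMk (hasFDerivAt_id ζ₀)
          (HasFDerivAt.prodMk ((hVdiff n h2).hasFDerivAt) ((hVdiff (n - 1) (by omega)).hasFDerivAt)))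
    have hzero : HasFDerivAt (fun ζ => R n ζ (V n ζ) (V (n - 1) ζ)) (0 : EuclideanSpace ℝ (Fin p) →L[ℝ] EuclideanSpace ℝ (Fin m)) ζ₀ :=
      (hasFDerivAt_const (0 : (EuclideanSpace ℝ (Fin m))) ζ₀).congr_of_eventuallyEq (hres n h1 h2)
    have huniq := hfull.unique hzero
    have happ : Mn (u, fderiv ℝ (V n) ζ₀ u, fderiv ℝ (V (n - 1)) ζ₀ u) = 0 := by
      have := congrArg (fun T : EuclideanSpace ℝ (Fin p) →L[ℝ] (EuclideanSpace ℝ (Fin m)) => T u) huniq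
      simpa using this
    rw [hC.fderiv, hA.fderiv, hB.fderiv]
    simp only [ContinuousLinearMap.coe_comp', Function.comp_apply,
      ContinuousLinearMap.prod_apply, ContinuousLinearMap.coe_id', id_eq,
      ContinuousLinearMap.zero_apply]
    rw [← map_add, ← map_add]
    convert happ using 2
    simp [Prod.ext_iff]
  -- final assembly
  obtain ⟨M, rfl⟩ : ∃ M, N = M + 1 := ⟨N - 1, by omega⟩
  refine ext_inner_right ℝ fun u => ?_
  rw [inner_grad' (fun ζ => 𝓕 (ζ, fun i : Fin (M + 1) => V ((i : ℕ) + 1) ζ)) ζ₀ u,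
    hred.fderiv, inner_add_left, inner_grad' (fun ζ => 𝓕 (ζ, W)) ζ₀ u, hpartζ.fderiv,
    sum_inner]
  simp only [ContinuousLinearMap.coe_comp', Function.comp_apply,
    ContinuousLinearMap.prod_apply, ContinuousLinearMap.coe_id', id_eq,
    ContinuousLinearMap.zero_apply, ContinuousLinearMap.adjoint_inner_left]
  -- split the full derivative into partial contributions
  have hw : ((ContinuousLinearMap.pi fun i : Fin (M + 1) => fderiv ℝ (V ((i : ℕ) + 1)) ζ₀) u)
      = ∑ i : Fin (M + 1), Pi.single i (fderiv ℝ (V ((i : ℕ) + 1)) ζ₀ u) := by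
    have h1 := Finset.univ_sum_single
      ((ContinuousLinearMap.pi fun i : Fin (M + 1) => fderiv ℝ (V ((i : ℕ) + 1)) ζ₀) u)
    rw [← h1]
    exact Finset.sum_congr rfl fun i _ => by rw [ContinuousLinearMap.pi_apply]
  have hprod : ((u, (ContinuousLinearMap.pi fun i : Fin (M + 1) => fderiv ℝ (V ((i : ℕ) + 1)) ζ₀) u) :
        EuclideanSpace ℝ (Fin p) × (Fin (M + 1) → EuclideanSpace ℝ (Fin m)))
      = (u, (0 : Fin (M + 1) → EuclideanSpace ℝ (Fin m)))
        + ∑ i : Fin (M + 1),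
            ((0 : EuclideanSpace ℝ (Fin p)), Pi.single i (fderiv ℝ (V ((i : ℕ) + 1)) ζ₀ u)) := by
    rw [← prod_mk_sum, Finset.sum_const_zero, hw]
    simp [Prod.ext_iff]
  have hsplit : L (u, (ContinuousLinearMap.pi fun i : Fin (M + 1) => fderiv ℝ (V ((i : ℕ) + 1)) ζ₀) u)
      = L (u, 0) + ∑ i : Fin (M + 1),
          ⟪gradient (fun w => 𝓕 (ζ₀, Function.update W i w)) (W i),
            fderiv ℝ (V ((i : ℕ) + 1)) ζ₀ u⟫ := by
    rw [hprod, map_add, map_sum]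
    congr 1
    exact Finset.sum_congr rfl fun i _ => (hg i _).symm
  rw [hsplit]
  congr 1
  -- now reduce to the scalar identity
  set a : ℕ → ℝ := fun n =>
    ⟪lam n, fderiv ℝ (fun x => R n ζ₀ x (V (n - 1) ζ₀)) (V n ζ₀) (fderiv ℝ (V n) ζ₀ u)⟫ with ha
  set b : ℕ → ℝ := fun n =>
    ⟪lam n, fderiv ℝ (fun y => R n ζ₀ (V n ζ₀) y) (V (n - 1) ζ₀)
      (fderiv ℝ (V (n - 1)) ζ₀ u)⟫ with hb
  set t : ℕ → ℝ := fun n => if h : 1 ≤ n ∧ n ≤ M + 1 then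
      ⟪gradient (fun w => 𝓕 (ζ₀, Function.update W (⟨n - 1, by omega⟩ : Fin (M + 1)) w))
        (V n ζ₀), fderiv ℝ (V n) ζ₀ u⟫ else 0 with ht
  have hb1 : b 1 = 0 := by
    rw [hb]
    simp [hD0]
  have hmid : ∀ k, 1 ≤ k → k ≤ M → a k + b (k + 1) = - t k := by
    intro k hk1 hk2
    have hv := hadj k hk1 (by omega)
    have hsc := congrArg (fun x : EuclideanSpace ℝ (Fin m) => ⟪x, fderiv ℝ (V k) ζ₀ u⟫) hv
    simp only [inner_add_left, ContinuousLinearMap.adjoint_inner_left, inner_neg_left] at hsc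
    rw [ha, hb, ht]
    simp only []
    rw [dif_pos ⟨hk1, by omega⟩]
    simpa [Nat.add_sub_cancel] using hsc
  have hlast : a (M + 1) = - t (M + 1) := by
    have hsc := congrArg (fun x : EuclideanSpace ℝ (Fin m) => ⟪x, fderiv ℝ (V (M + 1)) ζ₀ u⟫) hadjN
    simp only [ContinuousLinearMap.adjoint_inner_left, inner_neg_left] at hsc
    rw [ha, ht]
    simp only []
    rw [dif_pos ⟨by omega, by omega⟩]
    simpa [Nat.add_sub_cancel] using hsc
  have hterm : ∀ n, 1 ≤ n → n ≤ M + 1 →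
      ⟪lam n, fderiv ℝ (fun ζ => R n ζ (V n ζ₀) (V (n - 1) ζ₀)) ζ₀ u⟫ = -(a n) - b n := by
    intro n h1 h2
    have h0 := hK n h1 h2 u
    have hx : fderiv ℝ (fun ζ => R n ζ (V n ζ₀) (V (n - 1) ζ₀)) ζ₀ u
        = -(fderiv ℝ (fun x => R n ζ₀ x (V (n - 1) ζ₀)) (V n ζ₀) (fderiv ℝ (V n) ζ₀ u)
            + fderiv ℝ (fun y => R n ζ₀ (V n ζ₀) y) (V (n - 1) ζ₀)
              (fderiv ℝ (V (n - 1)) ζ₀ u)) := by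
      apply eq_neg_of_add_eq_zero_left
      rw [← add_assoc]
      exact h0
    rw [hx, inner_neg_right, inner_add_right, ha, hb]
    ring
  have hLHS : ∑ i : Fin (M + 1),
      ⟪gradient (fun w => 𝓕 (ζ₀, Function.update W i w)) (W i),
        fderiv ℝ (V ((i : ℕ) + 1)) ζ₀ u⟫
      = ∑ k ∈ Finset.range (M + 1), t (k + 1) := by
    rw [← Fin.sum_univ_eq_sum_range (fun k => t (k + 1)) (M + 1)]
    refine Finset.sum_congr rfl fun i _ => ?_
    rw [ht]
    simp only []
    rw [dif_pos ⟨by omega, by omega⟩]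
    simp only [Nat.add_sub_cancel, Fin.eta]
    rfl
  have hRHS : ∑ i : Fin (M + 1),
      ⟪lam ((i : ℕ) + 1),
        fderiv ℝ (fun ζ => R ((i : ℕ) + 1) ζ (V ((i : ℕ) + 1) ζ₀) (V (i : ℕ) ζ₀)) ζ₀ u⟫
      = ∑ k ∈ Finset.range (M + 1), (-(a (k + 1)) - b (k + 1)) := by
    rw [← Fin.sum_univ_eq_sum_range (fun k => -(a (k + 1)) - b (k + 1)) (M + 1)]
    refine Finset.sum_congr rfl fun i _ => ?_
    have := hterm ((i : ℕ) + 1) (by omega) (by omega)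
    simpa [Nat.add_sub_cancel] using this
  rw [hLHS, hRHS]
  exact (sum_adjoint_arith' M a b t hb1 hmid hlast).symm
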